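/- Let CP=(P_0,P_1) be a 2-PDS communicating via a finite set Locks (with disjoint state sets and stack alphabets) and let P_comb be the combined pushdown system. For every well-bracketed computation of CP ending in a configuration ((q_0,w_0,held_0),(q_1,w_1,held_1)), there is a reachable configuration (((q_0,held_0),(q_1,held_1)), w) of P_comb such that w restricted to Gamma_0 equals w_0 and w restricted to Gamma_1 equals w_1, where w restricted to Gamma_i denotes the subword of w consisting of its letters belonging to Gamma_i. -/
import Mathlib


/-- Transition labels of a pushdown system using locks. -/
inductive Label (L : Type) : Type where
  | state : Label L
  | push : Label L
  | pop : Label L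
  | acq : L → Label L
  | rel : L → Label L

/-- A pushdown system (PDS) using the set of locks `L`, with control states `Q`
and stack alphabet `Γ`. -/
structure PDS (Q Γ L : Type) where
  start : Q
  stateTr : Set (Q × Q)
  pushTr : Set (Q × (Q × Γ))
  popTr : Set ((Q × Γ) × Q)
  acqTr : Set (Q × (Q × L))
  relTr : Set ((Q × L) × Q)

/-- A local configuration of one thread: control state, stack and held locks. -/
abbrev LConf (Q Γ L : Type) : Type := Q × List Γ × Set L

/-- One labelled step of a single thread, in an environment where the locks in
`free` are free (held by no thread). -/
def PDS.LStep {Q Γ L : Type} (P : PDS Q Γ L) (free : Set L) (c : LConf Q Γ L) :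
    Label L → LConf Q Γ L → Prop
  | .state, c' => (c.1, c'.1) ∈ P.stateTr ∧ c'.2.1 = c.2.1 ∧ c'.2.2 = c.2.2
  | .push, c' => ∃ a, (c.1, (c'.1, a)) ∈ P.pushTr ∧ c'.2.1 = c.2.1 ++ [a] ∧ c'.2.2 = c.2.2
  | .pop, c' => ∃ a, ((c.1, a), c'.1) ∈ P.popTr ∧ c.2.1 = c'.2.1 ++ [a] ∧ c'.2.2 = c.2.2
  | .acq l, c' => (c.1, (c'.1, l)) ∈ P.acqTr ∧ l ∈ free ∧ c'.2.1 = c.2.1 ∧ c'.2.2 = c.2.2 ∪ {l}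
  | .rel l, c' => ((c.1, l), c'.1) ∈ P.relTr ∧ l ∈ c.2.2 ∧ c'.2.1 = c.2.1 ∧ c'.2.2 = c.2.2 \ {l}

/-- A 2-PDS communicating via locks `L`. -/
structure TwoPDS (Q₀ Γ₀ Q₁ Γ₁ L : Type) where
  P0 : PDS Q₀ Γ₀ L
  P1 : PDS Q₁ Γ₁ L

namespace TwoPDS

variable {Q₀ Γ₀ Q₁ Γ₁ L : Type}

/-- A configuration of a 2-PDS. -/
abbrev Conf (Q₀ Γ₀ Q₁ Γ₁ L : Type) : Type := LConf Q₀ Γ₀ L × LConf Q₁ Γ₁ L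

/-- The locks that are held by no thread. -/
def freeLocks (s : Conf Q₀ Γ₀ Q₁ Γ₁ L) : Set L := {l | l ∉ s.1.2.2 ∧ l ∉ s.2.2.2}

/-- The labelled transition relation of a 2-PDS: in a step labelled `(λ, i)`
only the `i`-th component changes. -/
def Step (CP : TwoPDS Q₀ Γ₀ Q₁ Γ₁ L) (s : Conf Q₀ Γ₀ Q₁ Γ₁ L) (lab : Label L × Fin 2)
    (t : Conf Q₀ Γ₀ Q₁ Γ₁ L) : Prop :=
  (lab.2 = 0 ∧ CP.P0.LStep (freeLocks s) s.1 lab.1 t.1 ∧ t.2 = s.2) ∨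
  (lab.2 = 1 ∧ CP.P1.LStep (freeLocks s) s.2 lab.1 t.2 ∧ t.1 = s.1)

/-- The initial configuration. -/
def initConf (CP : TwoPDS Q₀ Γ₀ Q₁ Γ₁ L) : Conf Q₀ Γ₀ Q₁ Γ₁ L :=
  ((CP.P0.start, [], ∅), (CP.P1.start, [], ∅))

/-- A (finite) computation `s 0 → s 1 → ⋯ → s len` of a 2-PDS, starting from the
initial configuration; the transition from `s k` to `s (k+1)` has label `lab k`. -/
structure Comp (CP : TwoPDS Q₀ Γ₀ Q₁ Γ₁ L) where
  len : ℕ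
  s : ℕ → Conf Q₀ Γ₀ Q₁ Γ₁ L
  lab : ℕ → Label L × Fin 2
  init : s 0 = CP.initConf
  step : ∀ k < len, CP.Step (s k) (lab k) (s (k + 1))

variable {CP : TwoPDS Q₀ Γ₀ Q₁ Γ₁ L}

/-- Height of the stack of thread `i` in the `k`-th configuration. -/
def Comp.height (c : Comp CP) (i : Fin 2) (k : ℕ) : ℕ :=
  if i = 0 then (c.s k).1.2.1.length else (c.s k).2.2.1.length

/-- The set of locks held by thread `i` in the `k`-th configuration. -/
def Comp.lockset (c : Comp CP) (i : Fin 2) (k : ℕ) : Set L :=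
  if i = 0 then (c.s k).1.2.2 else (c.s k).2.2.2

/-- The procedure return of thread `i` at position `j` matches the procedure call of
thread `i` at position `l`. -/
def Comp.Matching (c : Comp CP) (i : Fin 2) (l j : ℕ) : Prop :=
  l < j ∧ j < c.len ∧ c.lab l = (Label.push, i) ∧ c.lab j = (Label.pop, i) ∧
    c.height i l = c.height i (j + 1) ∧
    ∀ p, l + 1 ≤ p → p ≤ j → c.height i (l + 1) ≤ c.height i p

/-- Thread `i` of the 2-PDS follows contextual locking. -/
def Contextual (CP : TwoPDS Q₀ Γ₀ Q₁ Γ₁ L) (i : Fin 2) : Prop :=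
  ∀ c : Comp CP, ∀ l j, c.Matching i l j →
    c.lockset i l = c.lockset i j ∧ ∀ r, l ≤ r → r ≤ j → c.lockset i l ⊆ c.lockset i r

/-- `(l₁, l₂, l₃)` is a witness of non-well-bracketing of the computation `c`. -/
def Comp.Witness (c : Comp CP) (l₁ l₂ l₃ : ℕ) : Prop :=
  ∃ i : Fin 2, l₁ < l₂ ∧ l₂ < l₃ ∧ l₃ < c.len ∧ c.Matching i l₁ l₃ ∧
    c.lab l₂ = (Label.push, 1 - i) ∧ ∀ j, c.Matching (1 - i) l₂ j → l₃ < j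

/-- A computation is well-bracketed if it has no witness of non-well-bracketing. -/
def Comp.WellBracketed (c : Comp CP) : Prop := ∀ l₁ l₂ l₃, ¬ c.Witness l₁ l₂ l₃

/-- `Reach CP p q`: some computation of `CP` ends in a configuration whose control
states are `p` and `q`. -/
def Reach (CP : TwoPDS Q₀ Γ₀ Q₁ Γ₁ L) (p : Q₀) (q : Q₁) : Prop :=
  ∃ c : Comp CP, (c.s c.len).1.1 = p ∧ (c.s c.len).2.1 = q

end TwoPDS

/-- One step of a single pushdown system viewed as a plain (lock-free) transition
system on pairs (control state, stack); used for the combined PDS, whose lock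
alphabet is `Empty` so it has no acquire/release transitions. -/
def PDS.CStep {Q Γ L : Type} (P : PDS Q Γ L) (c c' : Q × List Γ) : Prop :=
  ((c.1, c'.1) ∈ P.stateTr ∧ c'.2 = c.2) ∨
  (∃ a, (c.1, (c'.1, a)) ∈ P.pushTr ∧ c'.2 = c.2 ++ [a]) ∨
  (∃ a, ((c.1, a), c'.1) ∈ P.popTr ∧ c.2 = c'.2 ++ [a])

/-- A configuration of a single PDS is reachable if some computation starting from
the initial control state with empty stack ends in it. -/
def PDS.Reachable {Q Γ L : Type} (P : PDS Q Γ L) (c : Q × List Γ) : Prop :=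
  Relation.ReflTransGen P.CStep (P.start, []) c

namespace TwoPDS

/-- Control states of the combined pushdown system. -/
abbrev CombState (Q₀ Q₁ L : Type) : Type := (Q₀ × Set L) × (Q₁ × Set L)

variable {Q₀ Γ₀ Q₁ Γ₁ L : Type}

/-- The combined pushdown system `P_comb` of a 2-PDS: a single PDS (using no locks)
whose control states are `(Q₀ × 2^L) × (Q₁ × 2^L)` and whose stack alphabet is the
disjoint union `Γ₀ ⊕ Γ₁`. Internal actions, lock acquisitions and lock releases of
the two threads become internal actions; calls and returns push/pop tagged symbols. -/
def comb (CP : TwoPDS Q₀ Γ₀ Q₁ Γ₁ L) : PDS (CombState Q₀ Q₁ L) (Γ₀ ⊕ Γ₁) Empty where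
  start := ((CP.P0.start, ∅), (CP.P1.start, ∅))
  stateTr := { x | match x with
    | (((q₀, h₀), (q₁, h₁)), ((q₀', h₀'), (q₁', h₁'))) =>
      ((q₀, q₀') ∈ CP.P0.stateTr ∧ h₀' = h₀ ∧ q₁' = q₁ ∧ h₁' = h₁) ∨
      ((q₁, q₁') ∈ CP.P1.stateTr ∧ h₁' = h₁ ∧ q₀' = q₀ ∧ h₀' = h₀) ∨
      (∃ l, (q₀, (q₀', l)) ∈ CP.P0.acqTr ∧ l ∉ h₀ ∪ h₁ ∧ h₀' = h₀ ∪ {l} ∧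
        q₁' = q₁ ∧ h₁' = h₁) ∨
      (∃ l, (q₁, (q₁', l)) ∈ CP.P1.acqTr ∧ l ∉ h₀ ∪ h₁ ∧ h₁' = h₁ ∪ {l} ∧
        q₀' = q₀ ∧ h₀' = h₀) ∨
      (∃ l, ((q₀, l), q₀') ∈ CP.P0.relTr ∧ l ∈ h₀ ∧ h₀' = h₀ \ {l} ∧
        q₁' = q₁ ∧ h₁' = h₁) ∨
      (∃ l, ((q₁, l), q₁') ∈ CP.P1.relTr ∧ l ∈ h₁ ∧ h₁' = h₁ \ {l} ∧
        q₀' = q₀ ∧ h₀' = h₀) }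
  pushTr := { x | match x with
    | (((q₀, h₀), (q₁, h₁)), (((q₀', h₀'), (q₁', h₁')), a)) =>
      (∃ b, a = Sum.inl b ∧ (q₀, (q₀', b)) ∈ CP.P0.pushTr ∧ h₀' = h₀ ∧
        q₁' = q₁ ∧ h₁' = h₁) ∨
      (∃ b, a = Sum.inr b ∧ (q₁, (q₁', b)) ∈ CP.P1.pushTr ∧ h₁' = h₁ ∧
        q₀' = q₀ ∧ h₀' = h₀) }
  popTr := { x | match x with
    | ((((q₀, h₀), (q₁, h₁)), a), ((q₀', h₀'), (q₁', h₁'))) =>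
      (∃ b, a = Sum.inl b ∧ ((q₀, b), q₀') ∈ CP.P0.popTr ∧ h₀' = h₀ ∧
        q₁' = q₁ ∧ h₁' = h₁) ∨
      (∃ b, a = Sum.inr b ∧ ((q₁, b), q₁') ∈ CP.P1.popTr ∧ h₁' = h₁ ∧
        q₀' = q₀ ∧ h₀' = h₀) }
  acqTr := ∅
  relTr := ∅

end TwoPDS

/- ===================== Auxiliary development ===================== -/

namespace TwoPDS

variable {Q₀ Γ₀ Q₁ Γ₁ L : Type} {CP : TwoPDS Q₀ Γ₀ Q₁ Γ₁ L}

lemma height_zero (c : Comp CP) (k : ℕ) : c.height 0 k = (c.s k).1.2.1.length := rfl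

lemma height_one (c : Comp CP) (k : ℕ) : c.height 1 k = (c.s k).2.2.1.length := by
  rw [Comp.height, if_neg (by decide : ¬ (1 : Fin 2) = 0)]

/-- Data about a stack entry pushed at time `t` by thread `i`, still on the
stack at time `k`, with `n` symbols of thread `i` below it. -/
def Ent (c : Comp CP) (k t : ℕ) (i : Fin 2) (n : ℕ) : Prop :=
  t < k ∧ c.lab t = (Label.push, i) ∧ c.height i t = n ∧
    ∀ r, t < r → r ≤ k → c.height i t < c.height i r

/-- Every entry of the combined stack is good. -/
def Good (c : Comp CP) (k : ℕ) (w : List (ℕ × (Γ₀ ⊕ Γ₁))) : Prop :=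
  ∀ u e v, w = u ++ e :: v →
    (∀ a : Γ₀, e.2 = Sum.inl a →
      Ent c k e.1 0 ((u.map Prod.snd).filterMap Sum.getLeft?).length) ∧
    (∀ b : Γ₁, e.2 = Sum.inr b →
      Ent c k e.1 1 ((u.map Prod.snd).filterMap Sum.getRight?).length)

/-- The simulation invariant at time `k`. -/
structure Inv (c : Comp CP) (k : ℕ) (w : List (ℕ × (Γ₀ ⊕ Γ₁))) : Prop where
  pw : w.Pairwise (fun e e' => e.1 < e'.1)
  good : Good c k w
  proj0 : (w.map Prod.snd).filterMap Sum.getLeft? = (c.s k).1.2.1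
  proj1 : (w.map Prod.snd).filterMap Sum.getRight? = (c.s k).2.2.1
  reach : CP.comb.Reachable
    ((((c.s k).1.1, (c.s k).1.2.2), ((c.s k).2.1, (c.s k).2.2.2)), w.map Prod.snd)

lemma bound_of_good {c : Comp CP} {k : ℕ} {w : List (ℕ × (Γ₀ ⊕ Γ₁))}
    (h : Good c k w) : ∀ e ∈ w, e.1 < k := by
  intro e he
  obtain ⟨u, v, rfl⟩ := List.append_of_mem he
  have h2 := h u e v rfl
  cases hx : e.2 with
  | inl a => exact (h2.1 a hx).1
  | inr b => exact (h2.2 b hx).1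

lemma Ent.succ {c : Comp CP} {k t : ℕ} {i : Fin 2} {n : ℕ}
    (h : Ent c k t i n) (hh : c.height i t < c.height i (k + 1)) :
    Ent c (k + 1) t i n := by
  obtain ⟨h1, h2, h3, h4⟩ := h
  refine ⟨Nat.lt_succ_of_lt h1, h2, h3, fun r hr hrk => ?_⟩
  rcases eq_or_lt_of_le hrk with rfl | h'
  · exact hh
  · exact h4 r hr (Nat.lt_succ_iff.mp h')

lemma good_succ {c : Comp CP} {k : ℕ} {w : List (ℕ × (Γ₀ ⊕ Γ₁))}
    (h : Good c k w) (h0 : c.height 0 k ≤ c.height 0 (k + 1))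
    (h1 : c.height 1 k ≤ c.height 1 (k + 1)) : Good c (k + 1) w := by
  intro u e v huev
  have h2 := h u e v huev
  constructor
  · intro a ha
    have h3 := h2.1 a ha
    exact h3.succ (lt_of_lt_of_le (h3.2.2.2 k h3.1 le_rfl) h0)
  · intro b hb
    have h3 := h2.2 b hb
    exact h3.succ (lt_of_lt_of_le (h3.2.2.2 k h3.1 le_rfl) h1)

lemma split_append_singleton {α : Type*} {w u v : List α} {e x : α}
    (h : u ++ e :: v = w ++ [x]) :
    (∃ v', v = v' ++ [x] ∧ w = u ++ e :: v') ∨ (u = w ∧ e = x ∧ v = []) := by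
  rcases v.eq_nil_or_concat with rfl | ⟨v', y, rfl⟩
  · right
    have h2 : u ++ [e] = w ++ [x] := by simpa using h
    obtain ⟨h3, h4⟩ := List.append_inj' h2 rfl
    exact ⟨h3, by simpa using h4, rfl⟩
  · left
    have h2 : (u ++ e :: v') ++ [y] = w ++ [x] := by
      simpa [List.concat_eq_append] using h
    obtain ⟨h3, h4⟩ := List.append_inj' h2 rfl
    have h5 : y = x := by simpa using h4
    exact ⟨v', by simp [List.concat_eq_append, h5], h3.symm⟩

lemma exists_last_filterMap {α β : Type*} (f : α → Option β) :
    ∀ (w : List α), w.filterMap f ≠ [] →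
      ∃ u x v, w = u ++ x :: v ∧ (f x).isSome ∧ v.filterMap f = [] := by
  intro w
  induction w using List.reverseRecOn with
  | nil => simp
  | append_singleton u x ih =>
    intro h
    cases hx : f x with
    | some b => exact ⟨u, x, [], rfl, by simp [hx], by simp⟩
    | none =>
      have h2 : u.filterMap f ≠ [] := by
        simpa [List.filterMap_append, hx] using h
      obtain ⟨u₁, y, v₁, rfl, hy, hv⟩ := ih h2
      exact ⟨u₁, y, v₁ ++ [x], by simp, hy, by simp [List.filterMap_append, hv, hx]⟩

lemma fmL (w : List (ℕ × (Γ₀ ⊕ Γ₁))) :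
    (w.map Prod.snd).filterMap Sum.getLeft? = w.filterMap (fun e => Sum.getLeft? e.2) := by
  rw [List.filterMap_map]; rfl

lemma fmR (w : List (ℕ × (Γ₀ ⊕ Γ₁))) :
    (w.map Prod.snd).filterMap Sum.getRight? = w.filterMap (fun e => Sum.getRight? e.2) := by
  rw [List.filterMap_map]; rfl

lemma Inv.internal {c : Comp CP} {k : ℕ} {w : List (ℕ × (Γ₀ ⊕ Γ₁))} (h : Inv c k w)
    (h0 : (c.s (k+1)).1.2.1 = (c.s k).1.2.1)
    (h1 : (c.s (k+1)).2.2.1 = (c.s k).2.2.1)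
    (hmem : ((((c.s k).1.1, (c.s k).1.2.2), ((c.s k).2.1, (c.s k).2.2.2)),
        (((c.s (k+1)).1.1, (c.s (k+1)).1.2.2), ((c.s (k+1)).2.1, (c.s (k+1)).2.2.2)))
        ∈ CP.comb.stateTr) :
    Inv c (k+1) w where
  pw := h.pw
  good := good_succ h.good (by rw [height_zero, height_zero, h0])
    (by rw [height_one, height_one, h1])
  proj0 := by rw [h0]; exact h.proj0
  proj1 := by rw [h1]; exact h.proj1
  reach := h.reach.tail (Or.inl ⟨hmem, rfl⟩)

lemma inv_step (c : Comp CP) (hwb : c.WellBracketed) {k : ℕ} (hk : k < c.len)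
    {w : List (ℕ × (Γ₀ ⊕ Γ₁))} (h : Inv c k w) : ∃ w', Inv c (k + 1) w' := by
  rcases c.step k hk with ⟨hi, hst, heq⟩ | ⟨hi, hst, heq⟩
  · -- thread 0 moves
    cases hl : (c.lab k).1 with
    | state =>
      rw [hl] at hst
      obtain ⟨hA, hS, hL⟩ := hst
      exact ⟨w, h.internal hS (by rw [heq])
        (Or.inl ⟨hA, hL, by rw [heq], by rw [heq]⟩)⟩
    | acq l =>
      rw [hl] at hst
      obtain ⟨hA, hfree, hS, hL⟩ := hst
      obtain ⟨hf1, hf2⟩ := hfree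
      refine ⟨w, h.internal hS (by rw [heq]) ?_⟩
      refine Or.inr (Or.inr (Or.inl ⟨l, hA, ?_, hL, by rw [heq], by rw [heq]⟩))
      intro hm
      rcases hm with hm | hm
      · exact hf1 hm
      · exact hf2 hm
    | rel l =>
      rw [hl] at hst
      obtain ⟨hA, hin, hS, hL⟩ := hst
      exact ⟨w, h.internal hS (by rw [heq])
        (Or.inr (Or.inr (Or.inr (Or.inr (Or.inl
          ⟨l, hA, hin, hL, by rw [heq], by rw [heq]⟩)))))⟩
    | push =>
      rw [hl] at hst
      obtain ⟨a, hA, hS, hL⟩ := hst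
      have hlabk : c.lab k = (Label.push, 0) := by rw [← hl, ← hi]
      refine ⟨w ++ [(k, Sum.inl a)], ?_, ?_, ?_, ?_, ?_⟩
      · refine List.pairwise_append.mpr ⟨h.pw, List.pairwise_singleton _ _, ?_⟩
        intro e he x hx
        rw [List.mem_singleton] at hx
        subst hx
        exact bound_of_good h.good e he
      · intro u e v huev
        rcases split_append_singleton huev.symm with ⟨v', rfl, rfl⟩ | ⟨rfl, rfl, rfl⟩
        · have h2 := h.good u e v' rfl
          have hh0 : c.height 0 k ≤ c.height 0 (k+1) := by
            rw [height_zero, height_zero, hS]; simp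
          have hh1 : c.height 1 k ≤ c.height 1 (k+1) := by
            rw [height_one, height_one, heq]
          constructor
          · intro a' ha'
            have h3 := h2.1 a' ha'
            exact h3.succ (lt_of_lt_of_le (h3.2.2.2 k h3.1 le_rfl) hh0)
          · intro b hb
            have h3 := h2.2 b hb
            exact h3.succ (lt_of_lt_of_le (h3.2.2.2 k h3.1 le_rfl) hh1)
        · constructor
          · intro a' _
            refine ⟨Nat.lt_succ_self k, hlabk, ?_, ?_⟩
            · rw [height_zero, h.proj0]
            · intro r hr hrk
              have hr' : r = k + 1 := le_antisymm hrk hr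
              subst hr'
              rw [height_zero, height_zero, hS]
              simp
          · intro b hb
            simp at hb
      · simp only [List.map_append, List.filterMap_append, h.proj0, hS]
        simp
      · simp only [List.map_append, List.filterMap_append, h.proj1]
        rw [heq]
        simp
      · refine h.reach.tail (Or.inr (Or.inl ⟨Sum.inl a, ?_, by simp⟩))
        exact Or.inl ⟨a, rfl, hA, hL, by rw [heq], by rw [heq]⟩
    | pop =>
      rw [hl] at hst
      obtain ⟨a, hA, hS, hL⟩ := hst
      have hlabk : c.lab k = (Label.pop, 0) := by rw [← hl, ← hi]
      have hne : w.filterMap (fun e => Sum.getLeft? e.2) ≠ [] := by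
        rw [← fmL, h.proj0, hS]; simp
      obtain ⟨u, x, v, hw, hxs, hv⟩ := exists_last_filterMap _ w hne
      obtain ⟨a', hx2⟩ : ∃ a', x.2 = Sum.inl a' := by
        cases hxx : x.2 with
        | inl a' => exact ⟨a', rfl⟩
        | inr b => rw [hxx] at hxs; simp at hxs
      have hEnt := (h.good u x v hw).1 a' hx2
      have hvL : (v.map Prod.snd).filterMap Sum.getLeft? = [] := by rw [fmL]; exact hv
      have hproj : ((u.map Prod.snd).filterMap Sum.getLeft?) ++ [a'] = (c.s k).1.2.1 := by
        rw [← h.proj0, hw]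
        simp [List.filterMap_append, hx2, hvL]
      have hua : ((u.map Prod.snd).filterMap Sum.getLeft?) = (c.s (k+1)).1.2.1 ∧ a' = a := by
        have h2 : ((u.map Prod.snd).filterMap Sum.getLeft?) ++ [a']
            = (c.s (k+1)).1.2.1 ++ [a] := by rw [hproj, hS]
        obtain ⟨h3, h4⟩ := List.append_inj' h2 rfl
        exact ⟨h3, by simpa using h4⟩
      obtain ⟨hu0, rfl⟩ := hua
      have hhl : c.height 0 x.1 = c.height 0 (k+1) := by
        rw [hEnt.2.2.1, height_zero, ← hu0]
      have hl1 : c.height 0 (x.1 + 1) = c.height 0 x.1 + 1 := by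
        rcases c.step x.1 (lt_trans hEnt.1 hk) with ⟨hi', hst', _⟩ | ⟨hi', _, _⟩
        · rw [hEnt.2.1] at hst'
          obtain ⟨b, _, hb, _⟩ := hst'
          rw [height_zero, height_zero, hb]
          simp
        · rw [hEnt.2.1] at hi'
          have h6 : (0 : Fin 2) = 1 := hi'
          exact absurd h6 (by decide)
      have hmatch : c.Matching 0 x.1 k :=
        ⟨hEnt.1, hk, hEnt.2.1, hlabk, hhl, by
          intro p hp1 hp2
          rw [hl1]
          exact hEnt.2.2.2 p (Nat.lt_of_succ_le hp1) hp2⟩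
      rcases v.eq_nil_or_concat with rfl | ⟨v₂, y, hy⟩
      · -- the popped symbol is on top of the combined stack
        refine ⟨u, ?_, ?_, ?_, ?_, ?_⟩
        · have hp := h.pw
          rw [hw] at hp
          exact (List.pairwise_append.mp hp).1
        · intro u₁ e v₁ hu₁
          have h2 := h.good u₁ e (v₁ ++ [x]) (by rw [hw, hu₁]; simp)
          constructor
          · intro b' hb'
            have h3 := h2.1 b' hb'
            refine h3.succ ?_
            rw [h3.2.2.1, height_zero, ← hu0, hu₁]
            simp [List.filterMap_append, hb']
          · intro b' hb'
            have h3 := h2.2 b' hb'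
            refine h3.succ ?_
            have h4 : c.height 1 (k+1) = c.height 1 k := by
              rw [height_one, height_one, heq]
            rw [h4]
            exact h3.2.2.2 k h3.1 le_rfl
        · exact hu0
        · have h5 : ((u.map Prod.snd).filterMap Sum.getRight?) = (c.s k).2.2.1 := by
            rw [← h.proj1, hw]
            simp [List.filterMap_append, hx2]
          rw [h5, heq]
        · refine h.reach.tail (Or.inr (Or.inr ⟨Sum.inl a', ?_, ?_⟩))
          · exact Or.inl ⟨a', rfl, hA, hL, by rw [heq], by rw [heq]⟩
          · rw [hw]; simp [hx2]
      · -- otherwise the computation would not be well-bracketed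
        exfalso
        rw [List.concat_eq_append] at hy
        subst hy
        obtain ⟨b, hy2⟩ : ∃ b, y.2 = Sum.inr b := by
          cases hyy : y.2 with
          | inl a'' => simp [List.filterMap_append, hyy] at hv
          | inr b => exact ⟨b, rfl⟩
        have hEnt2 := (h.good (u ++ x :: v₂) y [] (by rw [hw]; simp)).2 b hy2
        have hxy : x.1 < y.1 := by
          have hp := h.pw
          rw [hw] at hp
          have hp2 := (List.pairwise_append.mp hp).2.1
          exact (List.pairwise_cons.mp hp2).1 y (by simp)
        refine hwb x.1 y.1 k ⟨0, hxy, hEnt2.1, hk, hmatch, ?_, ?_⟩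
        · have h10 : (1 : Fin 2) - 0 = 1 := by decide
          rw [h10]
          exact hEnt2.2.1
        · intro j hm
          have h10 : (1 : Fin 2) - 0 = 1 := by decide
          rw [h10] at hm
          by_contra hjk
          push_neg at hjk
          have hm4 := hm.2.2.2.1
          have hjne : j ≠ k := by
            intro hjeq
            rw [hjeq, hlabk] at hm4
            have h6 : (0 : Fin 2) = 1 := congrArg Prod.snd hm4
            exact absurd h6 (by decide)
          have hjk' : j + 1 ≤ k := Nat.succ_le_of_lt (lt_of_le_of_ne hjk hjne)
          have h5 := hEnt2.2.2.2 (j+1) (Nat.lt_succ_of_lt hm.1) hjk'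
          rw [hm.2.2.2.2.1] at h5
          exact lt_irrefl _ h5
  · -- thread 1 moves
    cases hl : (c.lab k).1 with
    | state =>
      rw [hl] at hst
      obtain ⟨hA, hS, hL⟩ := hst
      exact ⟨w, h.internal (by rw [heq]) hS
        (Or.inr (Or.inl ⟨hA, hL, by rw [heq], by rw [heq]⟩))⟩
    | acq l =>
      rw [hl] at hst
      obtain ⟨hA, hfree, hS, hL⟩ := hst
      obtain ⟨hf1, hf2⟩ := hfree
      refine ⟨w, h.internal (by rw [heq]) hS ?_⟩
      refine Or.inr (Or.inr (Or.inr (Or.inl ⟨l, hA, ?_, hL, by rw [heq], by rw [heq]⟩)))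
      intro hm
      rcases hm with hm | hm
      · exact hf1 hm
      · exact hf2 hm
    | rel l =>
      rw [hl] at hst
      obtain ⟨hA, hin, hS, hL⟩ := hst
      exact ⟨w, h.internal (by rw [heq]) hS
        (Or.inr (Or.inr (Or.inr (Or.inr (Or.inr
          ⟨l, hA, hin, hL, by rw [heq], by rw [heq]⟩)))))⟩
    | push =>
      rw [hl] at hst
      obtain ⟨a, hA, hS, hL⟩ := hst
      have hlabk : c.lab k = (Label.push, 1) := by rw [← hl, ← hi]
      refine ⟨w ++ [(k, Sum.inr a)], ?_, ?_, ?_, ?_, ?_⟩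
      · refine List.pairwise_append.mpr ⟨h.pw, List.pairwise_singleton _ _, ?_⟩
        intro e he x hx
        rw [List.mem_singleton] at hx
        subst hx
        exact bound_of_good h.good e he
      · intro u e v huev
        rcases split_append_singleton huev.symm with ⟨v', rfl, rfl⟩ | ⟨rfl, rfl, rfl⟩
        · have h2 := h.good u e v' rfl
          have hh0 : c.height 0 k ≤ c.height 0 (k+1) := by
            rw [height_zero, height_zero, heq]
          have hh1 : c.height 1 k ≤ c.height 1 (k+1) := by
            rw [height_one, height_one, hS]; simp
          constructor
          · intro a' ha'
            have h3 := h2.1 a' ha'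
            exact h3.succ (lt_of_lt_of_le (h3.2.2.2 k h3.1 le_rfl) hh0)
          · intro b hb
            have h3 := h2.2 b hb
            exact h3.succ (lt_of_lt_of_le (h3.2.2.2 k h3.1 le_rfl) hh1)
        · constructor
          · intro a' ha'
            simp at ha'
          · intro b _
            refine ⟨Nat.lt_succ_self k, hlabk, ?_, ?_⟩
            · rw [height_one, h.proj1]
            · intro r hr hrk
              have hr' : r = k + 1 := le_antisymm hrk hr
              subst hr'
              rw [height_one, height_one, hS]
              simp
      · simp only [List.map_append, List.filterMap_append, h.proj0]
        rw [heq]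
        simp
      · simp only [List.map_append, List.filterMap_append, h.proj1, hS]
        simp
      · refine h.reach.tail (Or.inr (Or.inl ⟨Sum.inr a, ?_, by simp⟩))
        exact Or.inr ⟨a, rfl, hA, hL, by rw [heq], by rw [heq]⟩
    | pop =>
      rw [hl] at hst
      obtain ⟨a, hA, hS, hL⟩ := hst
      have hlabk : c.lab k = (Label.pop, 1) := by rw [← hl, ← hi]
      have hne : w.filterMap (fun e => Sum.getRight? e.2) ≠ [] := by
        rw [← fmR, h.proj1, hS]; simp
      obtain ⟨u, x, v, hw, hxs, hv⟩ := exists_last_filterMap _ w hne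
      obtain ⟨a', hx2⟩ : ∃ a', x.2 = Sum.inr a' := by
        cases hxx : x.2 with
        | inr a' => exact ⟨a', rfl⟩
        | inl b => rw [hxx] at hxs; simp at hxs
      have hEnt := (h.good u x v hw).2 a' hx2
      have hvR : (v.map Prod.snd).filterMap Sum.getRight? = [] := by rw [fmR]; exact hv
      have hproj : ((u.map Prod.snd).filterMap Sum.getRight?) ++ [a'] = (c.s k).2.2.1 := by
        rw [← h.proj1, hw]
        simp [List.filterMap_append, hx2, hvR]
      have hua : ((u.map Prod.snd).filterMap Sum.getRight?) = (c.s (k+1)).2.2.1 ∧ a' = a := by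
        have h2 : ((u.map Prod.snd).filterMap Sum.getRight?) ++ [a']
            = (c.s (k+1)).2.2.1 ++ [a] := by rw [hproj, hS]
        obtain ⟨h3, h4⟩ := List.append_inj' h2 rfl
        exact ⟨h3, by simpa using h4⟩
      obtain ⟨hu0, rfl⟩ := hua
      have hhl : c.height 1 x.1 = c.height 1 (k+1) := by
        rw [hEnt.2.2.1, height_one, ← hu0]
      have hl1 : c.height 1 (x.1 + 1) = c.height 1 x.1 + 1 := by
        rcases c.step x.1 (lt_trans hEnt.1 hk) with ⟨hi', _, _⟩ | ⟨hi', hst', _⟩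
        · rw [hEnt.2.1] at hi'
          have h6 : (1 : Fin 2) = 0 := hi'
          exact absurd h6 (by decide)
        · rw [hEnt.2.1] at hst'
          obtain ⟨b, _, hb, _⟩ := hst'
          rw [height_one, height_one, hb]
          simp
      have hmatch : c.Matching 1 x.1 k :=
        ⟨hEnt.1, hk, hEnt.2.1, hlabk, hhl, by
          intro p hp1 hp2
          rw [hl1]
          exact hEnt.2.2.2 p (Nat.lt_of_succ_le hp1) hp2⟩
      rcases v.eq_nil_or_concat with rfl | ⟨v₂, y, hy⟩
      · refine ⟨u, ?_, ?_, ?_, ?_, ?_⟩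
        · have hp := h.pw
          rw [hw] at hp
          exact (List.pairwise_append.mp hp).1
        · intro u₁ e v₁ hu₁
          have h2 := h.good u₁ e (v₁ ++ [x]) (by rw [hw, hu₁]; simp)
          constructor
          · intro b' hb'
            have h3 := h2.1 b' hb'
            refine h3.succ ?_
            have h4 : c.height 0 (k+1) = c.height 0 k := by
              rw [height_zero, height_zero, heq]
            rw [h4]
            exact h3.2.2.2 k h3.1 le_rfl
          · intro b' hb'
            have h3 := h2.2 b' hb'
            refine h3.succ ?_
            rw [h3.2.2.1, height_one, ← hu0, hu₁]
            simp [List.filterMap_append, hb']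
        · have h5 : ((u.map Prod.snd).filterMap Sum.getLeft?) = (c.s k).1.2.1 := by
            rw [← h.proj0, hw]
            simp [List.filterMap_append, hx2]
          rw [h5, heq]
        · exact hu0
        · refine h.reach.tail (Or.inr (Or.inr ⟨Sum.inr a', ?_, ?_⟩))
          · exact Or.inr ⟨a', rfl, hA, hL, by rw [heq], by rw [heq]⟩
          · rw [hw]; simp [hx2]
      · exfalso
        rw [List.concat_eq_append] at hy
        subst hy
        obtain ⟨b, hy2⟩ : ∃ b, y.2 = Sum.inl b := by
          cases hyy : y.2 with
          | inr a'' => simp [List.filterMap_append, hyy] at hv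
          | inl b => exact ⟨b, rfl⟩
        have hEnt2 := (h.good (u ++ x :: v₂) y [] (by rw [hw]; simp)).1 b hy2
        have hxy : x.1 < y.1 := by
          have hp := h.pw
          rw [hw] at hp
          have hp2 := (List.pairwise_append.mp hp).2.1
          exact (List.pairwise_cons.mp hp2).1 y (by simp)
        refine hwb x.1 y.1 k ⟨1, hxy, hEnt2.1, hk, hmatch, ?_, ?_⟩
        · have h10 : (1 : Fin 2) - 1 = 0 := by decide
          rw [h10]
          exact hEnt2.2.1
        · intro j hm
          have h10 : (1 : Fin 2) - 1 = 0 := by decide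
          rw [h10] at hm
          by_contra hjk
          push_neg at hjk
          have hm4 := hm.2.2.2.1
          have hjne : j ≠ k := by
            intro hjeq
            rw [hjeq, hlabk] at hm4
            have h6 : (1 : Fin 2) = 0 := congrArg Prod.snd hm4
            exact absurd h6 (by decide)
          have hjk' : j + 1 ≤ k := Nat.succ_le_of_lt (lt_of_le_of_ne hjk hjne)
          have h5 := hEnt2.2.2.2 (j+1) (Nat.lt_succ_of_lt hm.1) hjk'
          rw [hm.2.2.2.2.1] at h5
          exact lt_irrefl _ h5

lemma inv_all (c : Comp CP) (hwb : c.WellBracketed) :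
    ∀ k, k ≤ c.len → ∃ w, Inv c k w := by
  intro k
  induction k with
  | zero =>
    intro _
    refine ⟨[], List.Pairwise.nil, ?_, ?_, ?_, ?_⟩
    · intro u e v huev
      exact absurd huev (by simp)
    · simp [c.init, initConf]
    · simp [c.init, initConf]
    · rw [c.init]
      exact Relation.ReflTransGen.refl
  | succ k ih =>
    intro hk
    obtain ⟨w, hw⟩ := ih (Nat.le_of_succ_le hk)
    exact inv_step c hwb (Nat.lt_of_succ_le hk) hw

end TwoPDS

/-- For every well-bracketed computation of a 2-PDS `CP` ending in
the configuration `((q₀,w₀,h₀),(q₁,w₁,h₁))`, some configuration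
`(((q₀,h₀),(q₁,h₁)), w)` of the combined pushdown system is reachable, where `w`
restricted to `Γ₀` is `w₀` and `w` restricted to `Γ₁` is `w₁`. -/
theorem wellBracketed_reachable_implies_comb_reachable
    {Q₀ Γ₀ Q₁ Γ₁ L : Type} [Finite Q₀] [Finite Γ₀] [Finite Q₁] [Finite Γ₁] [Finite L]
    (CP : TwoPDS Q₀ Γ₀ Q₁ Γ₁ L) (c : TwoPDS.Comp CP) (hwb : c.WellBracketed)
    (q₀ : Q₀) (w₀ : List Γ₀) (h₀ : Set L) (q₁ : Q₁) (w₁ : List Γ₁) (h₁ : Set L)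
    (hend : c.s c.len = ((q₀, w₀, h₀), (q₁, w₁, h₁))) :
    ∃ w : List (Γ₀ ⊕ Γ₁), CP.comb.Reachable (((q₀, h₀), (q₁, h₁)), w) ∧
      w.filterMap Sum.getLeft? = w₀ ∧ w.filterMap Sum.getRight? = w₁ := by
  obtain ⟨w, hw⟩ := TwoPDS.inv_all c hwb c.len le_rfl
  refine ⟨w.map Prod.snd, ?_, ?_, ?_⟩
  · have h2 := hw.reach
    rw [hend] at h2
    exact h2
  · have h2 := hw.proj0
    rw [hend] at h2
    exact h2
  · have h2 := hw.proj1
    rw [hend] at h2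
    exact h2
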